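/- Let e¹,e²,e³ and a¹,a²,a³ be six linearly independent covectors at a point of a 6-dimensional real vector space, and S a 3×3 positive-definite symmetric real matrix with adjugate S̃. Then the forms ω = (det S)^{-1/2} Σ_{i,j} S̃_{ij} a^i∧e^j and its square satisfy (1/2)ω∧ω = −Σ_{i,j} S_{ij} â^i∧ê^j, where â^i = (1/2)Σ ε_{ijk}a^j∧a^k and ê^i = (1/2)Σ ε_{ijk}e^j∧e^k. -/

import Mathlib

/-- The Levi-Civita symbol on `{1,2,3}` (indexed by `Fin 3`). -/
noncomputable def eps (i j k : Fin 3) : ℝ :=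
  ((j.1 : ℝ) - (i.1 : ℝ)) * ((k.1 : ℝ) - (j.1 : ℝ)) * ((k.1 : ℝ) - (i.1 : ℝ)) / 2

/-- Wedge `α ∧ β ∧ γ ∧ δ` of four covectors, evaluated on four vectors. -/
noncomputable def w4 {V : Type*} (α β γ δ : V → ℝ) (v1 v2 v3 v4 : V) : ℝ :=
  Matrix.det !![α v1, α v2, α v3, α v4; β v1, β v2, β v3, β v4;
                γ v1, γ v2, γ v3, γ v4; δ v1, δ v2, δ v3, δ v4]

/-- Wedge of two 2-forms, evaluated on four vectors, with the `1/(2!2!)` shuffle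
normalization. -/
noncomputable def w22 {V : Type*} (A B : V → V → ℝ) (v1 v2 v3 v4 : V) : ℝ :=
  (4 : ℝ)⁻¹ * ∑ σ : Equiv.Perm (Fin 4), ((Equiv.Perm.sign σ : ℤ) : ℝ) *
    A (![v1, v2, v3, v4] (σ 0)) (![v1, v2, v3, v4] (σ 1)) *
    B (![v1, v2, v3, v4] (σ 2)) (![v1, v2, v3, v4] (σ 3))


lemma epsv000 : eps 0 0 0 = 0 := by norm_num [eps]
lemma epsv001 : eps 0 0 1 = 0 := by norm_num [eps]
lemma epsv002 : eps 0 0 2 = 0 := by norm_num [eps]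
lemma epsv010 : eps 0 1 0 = 0 := by norm_num [eps]
lemma epsv011 : eps 0 1 1 = 0 := by norm_num [eps]
lemma epsv012 : eps 0 1 2 = 1 := by norm_num [eps]
lemma epsv020 : eps 0 2 0 = 0 := by norm_num [eps]
lemma epsv021 : eps 0 2 1 = -1 := by norm_num [eps]
lemma epsv022 : eps 0 2 2 = 0 := by norm_num [eps]
lemma epsv100 : eps 1 0 0 = 0 := by norm_num [eps]
lemma epsv101 : eps 1 0 1 = 0 := by norm_num [eps]
lemma epsv102 : eps 1 0 2 = -1 := by norm_num [eps]
lemma epsv110 : eps 1 1 0 = 0 := by norm_num [eps]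
lemma epsv111 : eps 1 1 1 = 0 := by norm_num [eps]
lemma epsv112 : eps 1 1 2 = 0 := by norm_num [eps]
lemma epsv120 : eps 1 2 0 = 1 := by norm_num [eps]
lemma epsv121 : eps 1 2 1 = 0 := by norm_num [eps]
lemma epsv122 : eps 1 2 2 = 0 := by norm_num [eps]
lemma epsv200 : eps 2 0 0 = 0 := by norm_num [eps]
lemma epsv201 : eps 2 0 1 = 1 := by norm_num [eps]
lemma epsv202 : eps 2 0 2 = 0 := by norm_num [eps]
lemma epsv210 : eps 2 1 0 = -1 := by norm_num [eps]
lemma epsv211 : eps 2 1 1 = 0 := by norm_num [eps]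
lemma epsv212 : eps 2 1 2 = 0 := by norm_num [eps]
lemma epsv220 : eps 2 2 0 = 0 := by norm_num [eps]
lemma epsv221 : eps 2 2 1 = 0 := by norm_num [eps]
lemma epsv222 : eps 2 2 2 = 0 := by norm_num [eps]

lemma perm4 (f : Fin 4 → Fin 4 → Fin 4 → Fin 4 → ℝ) :
    ∑ σ : Equiv.Perm (Fin 4), ((Equiv.Perm.sign σ : ℤ) : ℝ) * f (σ 0) (σ 1) (σ 2) (σ 3) =
      (f 0 1 2 3 - f 0 1 3 2 - f 0 2 1 3 + f 0 2 3 1 + f 0 3 1 2 - f 0 3 2 1)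
      - (f 1 0 2 3 - f 1 0 3 2 - f 1 2 0 3 + f 1 2 3 0 + f 1 3 0 2 - f 1 3 2 0)
      + (f 2 0 1 3 - f 2 0 3 1 - f 2 1 0 3 + f 2 1 3 0 + f 2 3 0 1 - f 2 3 1 0)
      - (f 3 0 1 2 - f 3 0 2 1 - f 3 1 0 2 + f 3 1 2 0 + f 3 2 0 1 - f 3 2 1 0) := by
  rw [show (Finset.univ : Finset (Equiv.Perm (Fin 4))) =
      {(1 : Equiv.Perm (Fin 4)),
      Equiv.swap (3:Fin 4) 2,
      Equiv.swap (2:Fin 4) 1,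
      Equiv.swap (2:Fin 4) 1 * Equiv.swap (3:Fin 4) 2,
      Equiv.swap (3:Fin 4) 1 * Equiv.swap (3:Fin 4) 2,
      Equiv.swap (3:Fin 4) 1,
      Equiv.swap (1:Fin 4) 0,
      Equiv.swap (1:Fin 4) 0 * Equiv.swap (3:Fin 4) 2,
      Equiv.swap (1:Fin 4) 0 * Equiv.swap (2:Fin 4) 1,
      Equiv.swap (1:Fin 4) 0 * Equiv.swap (2:Fin 4) 1 * Equiv.swap (3:Fin 4) 2,
      Equiv.swap (1:Fin 4) 0 * Equiv.swap (3:Fin 4) 1 * Equiv.swap (3:Fin 4) 2,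
      Equiv.swap (1:Fin 4) 0 * Equiv.swap (3:Fin 4) 1,
      Equiv.swap (2:Fin 4) 0 * Equiv.swap (2:Fin 4) 1,
      Equiv.swap (2:Fin 4) 0 * Equiv.swap (2:Fin 4) 1 * Equiv.swap (3:Fin 4) 2,
      Equiv.swap (2:Fin 4) 0,
      Equiv.swap (2:Fin 4) 0 * Equiv.swap (3:Fin 4) 2,
      Equiv.swap (2:Fin 4) 0 * Equiv.swap (3:Fin 4) 1,
      Equiv.swap (2:Fin 4) 0 * Equiv.swap (3:Fin 4) 1 * Equiv.swap (3:Fin 4) 2,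
      Equiv.swap (3:Fin 4) 0 * Equiv.swap (3:Fin 4) 1 * Equiv.swap (3:Fin 4) 2,
      Equiv.swap (3:Fin 4) 0 * Equiv.swap (3:Fin 4) 1,
      Equiv.swap (3:Fin 4) 0 * Equiv.swap (3:Fin 4) 2,
      Equiv.swap (3:Fin 4) 0,
      Equiv.swap (3:Fin 4) 0 * Equiv.swap (2:Fin 4) 1 * Equiv.swap (3:Fin 4) 2,
      Equiv.swap (3:Fin 4) 0 * Equiv.swap (2:Fin 4) 1} from by decide]
  simp (config := { decide := true }) only [Finset.sum_insert, Finset.mem_insert,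
    Finset.mem_singleton, Finset.sum_singleton]
  simp (config := { decide := true }) only [Equiv.Perm.mul_apply, Equiv.swap_apply_def,
    Equiv.Perm.sign_swap, Equiv.Perm.sign_mul, Equiv.Perm.sign_one, map_mul]
  norm_num [show ((3:Fin 4) = 2) = False from by decide, show ((2:Fin 4) = 1) = False from by decide,
    show ((3:Fin 4) = 1) = False from by decide, show ((2:Fin 4) = 0) = False from by decide,
    show ((3:Fin 4) = 0) = False from by decide]
  ring

lemma w4_eq {V : Type*} (α β γ δ : V → ℝ) (v1 v2 v3 v4 : V) :
    w4 α β γ δ v1 v2 v3 v4 =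
      (α v1 * (β v2 * (γ v3 * δ v4)) - α v1 * (β v2 * (γ v4 * δ v3))
      - α v1 * (β v3 * (γ v2 * δ v4)) + α v1 * (β v3 * (γ v4 * δ v2))
      + α v1 * (β v4 * (γ v2 * δ v3)) - α v1 * (β v4 * (γ v3 * δ v2)))
      - (α v2 * (β v1 * (γ v3 * δ v4)) - α v2 * (β v1 * (γ v4 * δ v3))
      - α v2 * (β v3 * (γ v1 * δ v4)) + α v2 * (β v3 * (γ v4 * δ v1))
      + α v2 * (β v4 * (γ v1 * δ v3)) - α v2 * (β v4 * (γ v3 * δ v1)))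
      + (α v3 * (β v1 * (γ v2 * δ v4)) - α v3 * (β v1 * (γ v4 * δ v2))
      - α v3 * (β v2 * (γ v1 * δ v4)) + α v3 * (β v2 * (γ v4 * δ v1))
      + α v3 * (β v4 * (γ v1 * δ v2)) - α v3 * (β v4 * (γ v2 * δ v1)))
      - (α v4 * (β v1 * (γ v2 * δ v3)) - α v4 * (β v1 * (γ v3 * δ v2))
      - α v4 * (β v2 * (γ v1 * δ v3)) + α v4 * (β v2 * (γ v3 * δ v1))
      + α v4 * (β v3 * (γ v1 * δ v2)) - α v4 * (β v3 * (γ v2 * δ v1))) := by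
  rw [w4, Matrix.det_succ_row_zero]
  simp only [Fin.sum_univ_succ, Fin.sum_univ_zero, Matrix.det_fin_three, Matrix.submatrix_apply]
  simp [Fin.succAbove, Fin.lt_def, -Fin.val_fin_lt, -Fin.lt_iff_val_lt_val]
  ring

set_option maxHeartbeats 4000000 in
theorem half_omega_squared
    (V : Type*) [AddCommGroup V] [Module ℝ V] (hdim : Module.finrank ℝ V = 6)
    (e a : Fin 3 → (V →ₗ[ℝ] ℝ))
    (hind : LinearIndependent ℝ (Sum.elim e a))
    (S : Matrix (Fin 3) (Fin 3) ℝ) (hS : S.PosDef)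
    (ω : V → V → ℝ)
    (hω : ∀ u v, ω u v = (Real.sqrt S.det)⁻¹ *
      ∑ i, ∑ j, S.adjugate i j * (a i u * e j v - a i v * e j u)) :
    ∀ v1 v2 v3 v4 : V,
      (1 / 2 : ℝ) * w22 ω ω v1 v2 v3 v4 =
        -∑ i, ∑ j, S i j * ((1 / 4 : ℝ) * ∑ k, ∑ l, ∑ m, ∑ n,
          eps i k l * eps j m n * w4 (a k) (a l) (e m) (e n) v1 v2 v3 v4) := by
  intro v1 v2 v3 v4
  have hd : 0 < S.det := hS.det_pos
  have hdne : S.det ≠ 0 := ne_of_gt hd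
  have hsym : ∀ i j, S j i = S i j := fun i j => by
    have := congrFun (congrFun hS.1.eq i) j
    simpa [Matrix.conjTranspose_apply] using this
  have hkey : (Real.sqrt S.det)⁻¹ * (Real.sqrt S.det)⁻¹ = (S.det)⁻¹ := by
    rw [← mul_inv, Real.mul_self_sqrt hd.le]
  have hanti : ∀ u v, ω u v = -ω v u := by
    intro u v
    rw [hω u v, hω v u, ← mul_neg, ← Finset.sum_neg_distrib]
    congr 1
    refine Finset.sum_congr rfl fun i _ => ?_
    rw [← Finset.sum_neg_distrib]
    refine Finset.sum_congr rfl fun j _ => ?_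
    ring
  have h1 : (1 / 2 : ℝ) * w22 ω ω v1 v2 v3 v4 =
      ω v1 v2 * ω v3 v4 - ω v1 v3 * ω v2 v4 + ω v1 v4 * ω v2 v3 := by
    have h := perm4 (fun p q r s => ω (![v1, v2, v3, v4] p) (![v1, v2, v3, v4] q) *
      ω (![v1, v2, v3, v4] r) (![v1, v2, v3, v4] s))
    simp only [← mul_assoc, Matrix.cons_val_zero, Matrix.cons_val_one, Matrix.head_cons,
      Matrix.cons_val_two, Matrix.tail_cons, Matrix.cons_val_three] at h
    rw [w22, h, hanti v2 v1, hanti v3 v1, hanti v4 v1, hanti v3 v2, hanti v4 v2, hanti v4 v3]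
    ring
  have hST : Matrix.transpose S = S := Matrix.ext fun p q => hsym p q
  have hTsym : ∀ i j, S.adjugate j i = S.adjugate i j := fun i j => by
    calc S.adjugate j i = (Matrix.transpose S.adjugate) i j := rfl
      _ = (Matrix.adjugate (Matrix.transpose S)) i j := by rw [Matrix.adjugate_transpose]
      _ = S.adjugate i j := by rw [hST]
  have hAA : (S.adjugate).adjugate = S.det • S := by
    have := Matrix.adjugate_adjugate S (by simp : Fintype.card (Fin 3) ≠ 1)
    simpa using this
  have hR : ∀ (F : Fin 3 → Fin 3 → ℝ), S.det * (-∑ i, ∑ j, S i j * F i j) =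
      -∑ i, ∑ j, (S.adjugate).adjugate i j * F i j := by
    intro F
    rw [hAA]
    simp only [Matrix.smul_apply, smul_eq_mul, mul_neg, neg_inj, Finset.mul_sum, mul_assoc]
  rw [h1, hω v1 v2, hω v3 v4, hω v1 v3, hω v2 v4, hω v1 v4, hω v2 v3]
  have expand : ∀ X1 X2 X3 X4 X5 X6 : ℝ,
      ((Real.sqrt S.det)⁻¹ * X1) * ((Real.sqrt S.det)⁻¹ * X2)
      - ((Real.sqrt S.det)⁻¹ * X3) * ((Real.sqrt S.det)⁻¹ * X4)
      + ((Real.sqrt S.det)⁻¹ * X5) * ((Real.sqrt S.det)⁻¹ * X6)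
      = (S.det)⁻¹ * (X1 * X2 - X3 * X4 + X5 * X6) := by
    intro X1 X2 X3 X4 X5 X6
    rw [← hkey]; ring
  rw [expand, inv_mul_eq_iff_eq_mul₀ hdne, hR, Matrix.adjugate_fin_three (S.adjugate)]
  simp only [Fin.sum_univ_three,
    epsv000, epsv001, epsv002, epsv010, epsv011, epsv012, epsv020, epsv021, epsv022, epsv100, epsv101, epsv102, epsv110, epsv111, epsv112, epsv120, epsv121, epsv122, epsv200, epsv201, epsv202, epsv210, epsv211, epsv212, epsv220, epsv221, epsv222,
    Matrix.cons_val', Matrix.cons_val_zero, Matrix.cons_val_one, Matrix.head_cons,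
    Matrix.empty_val', Matrix.cons_val_fin_one, Matrix.head_fin_const, Matrix.cons_val_two,
    Matrix.tail_cons, Matrix.of_apply,
    zero_mul, mul_zero, neg_mul, one_mul, neg_neg, zero_add, add_zero, neg_zero, sub_zero,
    zero_sub, mul_neg, w4_eq]
  rw [hTsym 0 1, hTsym 0 2, hTsym 1 2]
  ring
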